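/- Let C_6 be the 6-cycle and let H = K_3 ⊔ K_3 be the disjoint union of two triangles, both with all vertices carrying the same label, and let u be any vertex of C_6 and v any vertex of H. Then for every height i the unfolding trees F_i^u and F_i^v are isomorphic, while for every k ≥ 0 and every height h ≥ k+2 the k-redundant neighborhood trees T_{h,k}^u and T_{h,k}^v are not isomorphic. Hence there exist vertices with identical unfolding trees of every height but different k-NTs (part 1 of the expressivity-incomparability theorem). -/

import Mathlib

open scoped Classical

universe u v

/-- A rooted labeled (unordered) tree: a root label together with a list of
child subtrees.  The list order is irrelevant for the isomorphism relation. -/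
inductive LTree (L : Type u) : Type u
  | node : L → List (LTree L) → LTree L

namespace LTree

variable {L : Type u} {L' C : Type v}

/-- The label of the root. -/
def label : LTree L → L
  | node a _ => a

/-- The child subtrees of the root. -/
def children : LTree L → List (LTree L)
  | node _ ts => ts

/-- Isomorphism of rooted labeled trees: there is a bijection between the node
sets preserving the root, the parent–child relation and node labels; for our
representation this means equal root labels and children that correspond, up to
a permutation, to pairwise isomorphic subtrees. -/
inductive Iso : LTree L → LTree L → Prop
  | node (a : L) {ts us vs : List (LTree L)} :
      List.Forall₂ Iso ts vs → vs.Perm us → Iso (node a ts) (node a us)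

/-- `Embeds t s` : `t` is an induced rooted subtree of `s`, i.e. the nodes of
`t` inject into the nodes of `s` preserving the root, labels and the
parent–child relation. -/
inductive Embeds : LTree L → LTree L → Prop
  | node (a : L) {ts us vs : List (LTree L)} :
      List.Forall₂ Embeds ts vs → vs.Subperm us → Embeds (node a ts) (node a us)

/-- Number of nodes of a rooted tree. -/
def size : LTree L → ℕ
  | node _ ts => 1 + (ts.attach.map (fun c => size c.1)).sum
decreasing_by simp_wf; have := List.sizeOf_lt_of_mem c.2; omega

/-- Relabel a tree by `f`. -/
def map (f : L → L') : LTree L → LTree L'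
  | node a ts => node (f a) (ts.attach.map (fun c => map f c.1))
decreasing_by simp_wf; have := List.sizeOf_lt_of_mem c.2; omega

/-- Number of nodes of the tree carrying label `x`. -/
def countLabel [DecidableEq L] (x : L) : LTree L → ℕ
  | node a ts => (if a = x then 1 else 0) + (ts.attach.map (fun c => countLabel x c.1)).sum
decreasing_by simp_wf; have := List.sizeOf_lt_of_mem c.2; omega

/-- Number of nodes at depth `d` carrying label `x`. -/
def countAt [DecidableEq L] (x : L) : ℕ → LTree L → ℕ
  | 0, node a _ => if a = x then 1 else 0
  | d+1, node _ ts => (ts.attach.map (fun c => countAt x d c.1)).sum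
termination_by _ t => sizeOf t
decreasing_by simp_wf; have := List.sizeOf_lt_of_mem c.2; omega

/-- `SubtreeAt t d s` : `s` is the subtree of `t` rooted at one of the nodes of
`t` at depth `d`. -/
inductive SubtreeAt : LTree L → ℕ → LTree L → Prop
  | refl (t : LTree L) : SubtreeAt t 0 t
  | step {t c s : LTree L} {d : ℕ} : c ∈ t.children → SubtreeAt c d s → SubtreeAt t (d+1) s

/-- The AHU canonical value: `ahu f t = f (label t) {{ ahu f c | c child of t }}`,
computed bottom-up (a leaf gets `f (label) ∅`). -/
noncomputable def ahu (f : L → Multiset C → C) : LTree L → C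
  | node a ts => f a (↑(ts.attach.map (fun c => ahu f c.1)) : Multiset C)
decreasing_by simp_wf; have := List.sizeOf_lt_of_mem c.2; omega

end LTree

section Graph

variable {V : Type u} {X : Type v}

/-- The unfolding tree `F_i^v` of height `i` of the vertex `v`, with node labels
given by `μ` (a node representing the graph vertex `x` is labeled `μ x`). -/
noncomputable def SimpleGraph.unfoldingTree (G : SimpleGraph V) [Fintype V] (μ : V → X) :
    ℕ → V → LTree X
  | 0, u => .node (μ u) []
  | i+1, u => .node (μ u) ((G.neighborFinset u).toList.map (G.unfoldingTree μ i))

/-- Auxiliary recursion for `k`-redundant neighborhood trees: `r` is the root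
vertex, `d` is the current depth and `x` the currently represented vertex.  A
neighbor `y` is kept at depth `d + 1` iff `d + 1 ≤ dist r y + k`; since the
minimal depth at which `y` occurs in the unfolding tree rooted at `r` is
`dist r y`, this is exactly the pruning condition
`depth(u) ≤ depth(w) + k` for all nodes `w` with `φ(u) = φ(w)`. -/
noncomputable def SimpleGraph.ntAux (G : SimpleGraph V) [Fintype V] (μ : V → X)
    (r : V) (k : ℕ) : ℕ → ℕ → V → LTree X
  | 0, _, x => .node (μ x) []
  | i+1, d, x => .node (μ x)
      (((G.neighborFinset x).filter (fun y => d + 1 ≤ G.dist r y + k)).toList.map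
        (G.ntAux μ r k i (d+1)))

/-- The `k`-redundant neighborhood tree `T_{i,k}^v` of height `i` of vertex `v`. -/
noncomputable def SimpleGraph.ntTree (G : SimpleGraph V) [Fintype V] (μ : V → X)
    (i k : ℕ) (v : V) : LTree X :=
  G.ntAux μ v k i 0 v

end Graph

/-- The disjoint union of two triangles `K₃ ⊔ K₃`, realized on `Fin 3 ⊕ Fin 3`:
two distinct vertices are adjacent iff they lie on the same side. -/
noncomputable def twoTriangles : SimpleGraph (Fin 3 ⊕ Fin 3) :=
  SimpleGraph.fromRel (fun x y => x.isLeft = y.isLeft)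

section AuxProofs
namespace LTree
variable {L : Type u}

lemma countAt_zero' [DecidableEq L] (x a : L) (ts : List (LTree L)) :
    countAt x 0 (node a ts) = if a = x then 1 else 0 := by
  simp [countAt]

lemma countAt_succ' [DecidableEq L] (x : L) (d : ℕ) (a : L) (ts : List (LTree L)) :
    countAt x (d+1) (node a ts) = (ts.map (countAt x d)).sum := by
  simp [countAt, List.attach_map_val]

lemma countAt_unit_zero (t : LTree Unit) : countAt () 0 t = 1 := by
  cases t with
  | node a ts => cases a; simp [countAt_zero']

lemma countAt_iso_aux [DecidableEq L] (x : L) :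
    ∀ n (t s : LTree L), sizeOf t ≤ n → Iso t s → ∀ D, countAt x D t = countAt x D s := by
  intro n
  induction n with
  | zero =>
    intro t s ht
    exfalso
    cases t with
    | node a ts => simp at ht
  | succ n ih =>
    intro t s ht hiso D
    cases hiso with
    | @node a ts us vs hf hperm =>
      cases D with
      | zero => simp [countAt_zero']
      | succ D =>
        rw [countAt_succ', countAt_succ']
        have hsz : ∀ c ∈ ts, sizeOf c ≤ n := by
          intro c hc
          have := List.sizeOf_lt_of_mem hc
          simp at ht
          omega
        have key : ∀ (l₁ l₂ : List (LTree L)), (∀ c ∈ l₁, sizeOf c ≤ n) →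
            List.Forall₂ Iso l₁ l₂ → l₁.map (countAt x D) = l₂.map (countAt x D) := by
          intro l₁ l₂ hl hf
          induction hf with
          | nil => rfl
          | cons h _ ih2 =>
            simp only [List.map_cons]
            refine congrArg₂ _ ?_ (ih2 ?_)
            · exact ih _ _ (hl _ (by simp)) h D
            · intro c hc; exact hl _ (by simp [hc])
        rw [key ts vs hsz hf]
        exact (hperm.map (countAt x D)).sum_eq

lemma countAt_iso [DecidableEq L] (x : L) {t s : LTree L} (h : Iso t s) (D : ℕ) :
    countAt x D t = countAt x D s :=
  countAt_iso_aux x (sizeOf t) t s le_rfl h D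

end LTree
lemma iso_two_regular {V : Type u} {W : Type v} [Fintype V] [Fintype W]
    (G : SimpleGraph V) (H : SimpleGraph W)
    (hG : ∀ w : V, (G.neighborFinset w).toList.length = 2)
    (hH : ∀ w : W, (H.neighborFinset w).toList.length = 2) :
    ∀ (i : ℕ) (u : V) (v : W),
      LTree.Iso (G.unfoldingTree (fun _ => ()) i u) (H.unfoldingTree (fun _ => ()) i v) := by
  intro i
  induction i with
  | zero =>
    intro u v
    exact LTree.Iso.node () List.Forall₂.nil (List.Perm.refl [])
  | succ i ih =>
    intro u v
    obtain ⟨a, b, hab⟩ := List.length_eq_two.mp (hG u)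
    obtain ⟨c, d, hcd⟩ := List.length_eq_two.mp (hH v)
    simp only [SimpleGraph.unfoldingTree, hab, hcd, List.map_cons, List.map_nil]
    exact LTree.Iso.node ()
      (List.Forall₂.cons (ih a c) (List.Forall₂.cons (ih b d) List.Forall₂.nil))
      (List.Perm.refl _)
lemma twoTriangles_adj {x y : Fin 3 ⊕ Fin 3} :
    twoTriangles.Adj x y ↔ x ≠ y ∧ x.isLeft = y.isLeft := by
  simp only [twoTriangles, SimpleGraph.fromRel_adj]
  constructor
  · rintro ⟨h, h2 | h2⟩
    · exact ⟨h, h2⟩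
    · exact ⟨h, h2.symm⟩
  · rintro ⟨h, h2⟩; exact ⟨h, Or.inl h2⟩

lemma twoTriangles_degree (w : Fin 3 ⊕ Fin 3) :
    (twoTriangles.neighborFinset w).toList.length = 2 := by
  rw [Finset.length_toList]
  have : twoTriangles.neighborFinset w =
      Finset.univ.filter (fun y => w ≠ y ∧ w.isLeft = y.isLeft) := by
    ext y
    simp [SimpleGraph.mem_neighborFinset, twoTriangles_adj]
  rw [this]
  fin_cases w <;> decide

lemma c6_card : ∀ w : Fin 6, ((SimpleGraph.cycleGraph 6).neighborFinset w).card = 2 := by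
  decide

lemma c6_degree' (w : Fin 6) (inst : Fintype ((SimpleGraph.cycleGraph 6).neighborSet w)) :
    (@SimpleGraph.neighborFinset _ (SimpleGraph.cycleGraph 6) w inst).toList.length = 2 := by
  rw [show inst = ((SimpleGraph.cycleGraph 6).neighborSetFintype w) from Subsingleton.elim _ _]
  rw [Finset.length_toList]
  exact c6_card w
lemma twoTriangles_reachable_isLeft {x y : Fin 3 ⊕ Fin 3}
    (h : twoTriangles.Reachable x y) : x.isLeft = y.isLeft := by
  obtain ⟨w⟩ := h
  induction w with
  | nil => rfl
  | cons h _ ih => exact (twoTriangles_adj.mp h).2.trans ih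

lemma twoTriangles_dist_le (r y : Fin 3 ⊕ Fin 3) : twoTriangles.dist r y ≤ 1 := by
  by_cases hr : twoTriangles.Reachable r y
  · by_cases he : r = y
    · subst he; simp [SimpleGraph.dist_self]
    · by_cases hl : r.isLeft = y.isLeft
      · exact le_of_eq (SimpleGraph.dist_eq_one_iff_adj.mpr (twoTriangles_adj.mpr ⟨he, hl⟩))
      · exact absurd (twoTriangles_reachable_isLeft hr) hl
  · rw [SimpleGraph.dist_eq_zero_of_not_reachable hr]; omega
lemma nt_countAt_eq_zero {V : Type u} [Fintype V] (G : SimpleGraph V)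
    (r : V) (k : ℕ) (hdist : ∀ y, G.dist r y ≤ 1) :
    ∀ (i d D : ℕ) (x : V), 1 ≤ D → k + 2 ≤ d + D →
      LTree.countAt () D (G.ntAux (fun _ => ()) r k i d x) = 0 := by
  intro i
  induction i with
  | zero =>
    intro d D x hD _
    obtain ⟨D', rfl⟩ : ∃ D', D = D' + 1 := ⟨D - 1, by omega⟩
    simp [SimpleGraph.ntAux, LTree.countAt_succ']
  | succ i ih =>
    intro d D x hD hdk
    obtain ⟨D', rfl⟩ : ∃ D', D = D' + 1 := ⟨D - 1, by omega⟩
    simp only [SimpleGraph.ntAux, LTree.countAt_succ']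
    cases D' with
    | zero =>
      have : ((G.neighborFinset x).filter (fun y => d + 1 ≤ G.dist r y + k)) = ∅ := by
        refine Finset.filter_eq_empty_iff.mpr ?_
        intro y _
        have := hdist y
        omega
      rw [this]; simp
    | succ D'' =>
      refine List.sum_eq_zero ?_
      intro z hz
      simp only [List.map_map, List.mem_map] at hz
      obtain ⟨y, hy, rfl⟩ := hz
      exact ih (d+1) (D''+1) y (by omega) (by omega)

lemma nt_countAt_child {V : Type u} [Fintype V] (G : SimpleGraph V) (r : V)
    (k i d D : ℕ) (x y : V) (hy : G.Adj x y) (hcond : d + 1 ≤ G.dist r y + k)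
    (hpos : 1 ≤ LTree.countAt () D (G.ntAux (fun _ => ()) r k i (d+1) y)) :
    1 ≤ LTree.countAt () (D+1) (G.ntAux (fun _ => ()) r k (i+1) d x) := by
  simp only [SimpleGraph.ntAux, LTree.countAt_succ', List.map_map]
  have hmem : y ∈ ((G.neighborFinset x).filter (fun y => d + 1 ≤ G.dist r y + k)).toList :=
    Finset.mem_toList.mpr (Finset.mem_filter.mpr ⟨(SimpleGraph.mem_neighborFinset _ _ _).mpr hy, hcond⟩)
  have hmem2 : LTree.countAt () D (G.ntAux (fun _ => ()) r k i (d+1) y) ∈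
      ((G.neighborFinset x).filter (fun y => d + 1 ≤ G.dist r y + k)).toList.map
        ((LTree.countAt () D) ∘ (G.ntAux (fun _ => ()) r k i (d+1))) :=
    List.mem_map_of_mem hmem
  calc 1 ≤ LTree.countAt () D (G.ntAux (fun _ => ()) r k i (d+1) y) := hpos
    _ ≤ _ := List.single_le_sum (fun _ _ => Nat.zero_le _) _ hmem2
lemma c6_adj_succ : ∀ w : Fin 6, (SimpleGraph.cycleGraph 6).Adj w (w + 1) := by decide

lemma c6_reach (a b : Fin 6) : (SimpleGraph.cycleGraph 6).Reachable a b :=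
  (SimpleGraph.cycleGraph_connected (n := 5)).preconnected a b

lemma c6_dist_one (u : Fin 6) : 1 ≤ (SimpleGraph.cycleGraph 6).dist u (u + 1) := by
  refine Nat.one_le_iff_ne_zero.mpr (SimpleGraph.dist_ne_zero_iff_ne_and_reachable.mpr ⟨?_, c6_reach _ _⟩)
  revert u; decide

lemma c6_dist_two (u : Fin 6) : 2 ≤ (SimpleGraph.cycleGraph 6).dist u (u + 1 + 1) := by
  have h0 : (SimpleGraph.cycleGraph 6).dist u (u + 1 + 1) ≠ 0 := by
    refine SimpleGraph.dist_ne_zero_iff_ne_and_reachable.mpr ⟨?_, c6_reach _ _⟩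
    revert u; decide
  have h1 : (SimpleGraph.cycleGraph 6).dist u (u + 1 + 1) ≠ 1 := by
    intro h
    have h2 := SimpleGraph.dist_eq_one_iff_adj.mp h
    have h3 : ∀ w : Fin 6, ¬ (SimpleGraph.cycleGraph 6).Adj w (w + 1 + 1) := by decide
    exact h3 u h2
  omega

lemma c6_dist_three (u : Fin 6) : 2 ≤ (SimpleGraph.cycleGraph 6).dist u (u + 1 + 1 + 1) := by
  have h0 : (SimpleGraph.cycleGraph 6).dist u (u + 1 + 1 + 1) ≠ 0 := by
    refine SimpleGraph.dist_ne_zero_iff_ne_and_reachable.mpr ⟨?_, c6_reach _ _⟩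
    revert u; decide
  have h1 : (SimpleGraph.cycleGraph 6).dist u (u + 1 + 1 + 1) ≠ 1 := by
    intro h
    have h2 := SimpleGraph.dist_eq_one_iff_adj.mp h
    have h3 : ∀ w : Fin 6, ¬ (SimpleGraph.cycleGraph 6).Adj w (w + 1 + 1 + 1) := by decide
    exact h3 u h2
  omega
lemma c6_count (u : Fin 6) (k : ℕ) :
    ∀ (n j : ℕ), j + n = k → ∀ i, n + 2 ≤ i →
      1 ≤ LTree.countAt () (n + 2)
        ((SimpleGraph.cycleGraph 6).ntAux (fun _ => ()) u k i j
          (if j % 2 = 0 then u else u + 1)) := by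
  intro n
  induction n with
  | zero =>
    intro j hj i hi
    obtain ⟨i', rfl⟩ : ∃ i', i = i' + 1 + 1 := ⟨i - 2, by omega⟩
    by_cases hp : j % 2 = 0
    · rw [if_pos hp]
      show 1 ≤ LTree.countAt () (1 + 1) _
      refine nt_countAt_child _ _ _ _ _ _ _ (u + 1) (c6_adj_succ u)
        (by have := c6_dist_one u; omega) ?_
      refine nt_countAt_child _ _ _ _ _ _ _ (u + 1 + 1) (c6_adj_succ (u + 1))
        (by have := c6_dist_two u; omega) ?_
      exact le_of_eq (LTree.countAt_unit_zero _).symm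
    · rw [if_neg hp]
      show 1 ≤ LTree.countAt () (1 + 1) _
      refine nt_countAt_child _ _ _ _ _ _ _ (u + 1 + 1) (c6_adj_succ (u + 1))
        (by have := c6_dist_two u; omega) ?_
      refine nt_countAt_child _ _ _ _ _ _ _ (u + 1 + 1 + 1) (c6_adj_succ (u + 1 + 1))
        (by have := c6_dist_three u; omega) ?_
      exact le_of_eq (LTree.countAt_unit_zero _).symm
  | succ n ih =>
    intro j hj i hi
    obtain ⟨i', rfl⟩ : ∃ i', i = i' + 1 := ⟨i - 1, by omega⟩
    have hstep := ih (j + 1) (by omega) i' (by omega)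
    by_cases hp : j % 2 = 0
    · rw [if_pos hp]
      have hp2 : ¬ ((j + 1) % 2 = 0) := by omega
      rw [if_neg hp2] at hstep
      exact nt_countAt_child _ _ _ _ _ _ _ (u + 1) (c6_adj_succ u) (by omega) hstep
    · rw [if_neg hp]
      have hp2 : (j + 1) % 2 = 0 := by omega
      rw [if_pos hp2] at hstep
      exact nt_countAt_child _ _ _ _ _ _ _ u (c6_adj_succ u).symm (by omega) hstep

set_option maxHeartbeats 1000000 in
theorem hexagon_vs_twoTriangles' (u : Fin 6) (v : Fin 3 ⊕ Fin 3) :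
    (∀ i : ℕ,
      LTree.Iso ((SimpleGraph.cycleGraph 6).unfoldingTree (fun _ => ()) i u)
        (twoTriangles.unfoldingTree (fun _ => ()) i v)) ∧
    (∀ k h : ℕ, k + 2 ≤ h →
      ¬ LTree.Iso ((SimpleGraph.cycleGraph 6).ntTree (fun _ => ()) h k u)
        (twoTriangles.ntTree (fun _ => ()) h k v)) := by
  constructor
  · intro i
    exact iso_two_regular _ _ (fun w => c6_degree' w _) twoTriangles_degree i u v
  · intro k h hkh hiso
    have hc := LTree.countAt_iso () hiso (k + 2)
    have h1 : 1 ≤ LTree.countAt () (k + 2)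
        ((SimpleGraph.cycleGraph 6).ntTree (fun _ => ()) h k u) := by
      have := c6_count u k k 0 (by omega) h hkh
      simpa [SimpleGraph.ntTree] using this
    have h2 : LTree.countAt () (k + 2) (twoTriangles.ntTree (fun _ => ()) h k v) = 0 := by
      simpa [SimpleGraph.ntTree] using
        nt_countAt_eq_zero twoTriangles v k (twoTriangles_dist_le v) h 0 (k + 2) v
          (by omega) (by omega)
    omega
end AuxProofs

/-- For any vertex `u` of the 6-cycle `C₆` and any vertex `v`
of `K₃ ⊔ K₃` (everything uniformly labeled), the unfolding trees `F_i^u` and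
`F_i^v` are isomorphic for every height `i`, while for every `k ≥ 0` and every
height `h ≥ k + 2` the `k`-redundant neighborhood trees `T_{h,k}^u` and
`T_{h,k}^v` are not isomorphic. -/
theorem hexagon_vs_twoTriangles (u : Fin 6) (v : Fin 3 ⊕ Fin 3) :
    (∀ i : ℕ,
      LTree.Iso ((SimpleGraph.cycleGraph 6).unfoldingTree (fun _ => ()) i u)
        (twoTriangles.unfoldingTree (fun _ => ()) i v)) ∧
    (∀ k h : ℕ, k + 2 ≤ h →
      ¬ LTree.Iso ((SimpleGraph.cycleGraph 6).ntTree (fun _ => ()) h k u)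
        (twoTriangles.ntTree (fun _ => ()) h k v)) := by
  exact hexagon_vs_twoTriangles' u v
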